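/- If M is a dual strongly self-CS-Baer module, then every direct summand of M is fully invariant; consequently, M has no direct summand isomorphic to N ⊕ N for a nonzero module N. -/

import Mathlib

section Defs

variable {R : Type*} [Ring R] {M : Type*} [AddCommGroup M] [Module R M]

/-- `K` is a direct summand of `M`. -/
def IsDirectSummand (K : Submodule R M) : Prop :=
  ∃ K' : Submodule R M, IsCompl K K'

/-- `X` is an essential submodule of `Y`. -/
def EssentialIn (X Y : Submodule R M) : Prop :=
  X ≤ Y ∧ ∀ Z : Submodule R M, Z ≤ Y → X ⊓ Z = ⊥ → Z = ⊥

/-- `K` is a fully invariant submodule of `M`. -/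
def FullyInvariant (K : Submodule R M) : Prop :=
  ∀ f : M →ₗ[R] M, K.map f ≤ K

/-- `L` lies above the direct summand `K`: `K` is a direct summand of `M`, `K ≤ L`
and `L/K` is superfluous (small) in `M/K`. -/
def LiesAbove (L K : Submodule R M) : Prop :=
  IsDirectSummand K ∧ K ≤ L ∧
    ∀ X : Submodule R M, K ≤ X → L ⊔ X = ⊤ → X = ⊤

/-- `lU(X)`: the set of endomorphisms of `M` vanishing on `X`. -/
def lU (X : Submodule R M) : Set (M →ₗ[R] M) :=
  {f : M →ₗ[R] M | X ≤ LinearMap.ker f}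

end Defs

section ModDefs

variable (R : Type*) [Ring R] (M : Type*) [AddCommGroup M] [Module R M]
  (N : Type*) [AddCommGroup N] [Module R N]

/-- `N` is `M`-CS-Rickart. -/
def CSRickart : Prop :=
  ∀ f : M →ₗ[R] N, ∃ K : Submodule R M,
    IsDirectSummand K ∧ EssentialIn (LinearMap.ker f) K

/-- `N` is `M`-CS-Baer. -/
def CSBaer : Prop :=
  ∀ (ι : Type*) (f : ι → (M →ₗ[R] N)), ∃ K : Submodule R M,
    IsDirectSummand K ∧ EssentialIn (⨅ i, LinearMap.ker (f i)) K

/-- `N` is strongly `M`-CS-Baer. -/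
def StrongCSBaer : Prop :=
  ∀ (ι : Type*) (f : ι → (M →ₗ[R] N)), ∃ K : Submodule R M,
    IsDirectSummand K ∧ FullyInvariant K ∧ EssentialIn (⨅ i, LinearMap.ker (f i)) K

/-- `N` is `M`-Baer. -/
def Baer : Prop :=
  ∀ (ι : Type*) (f : ι → (M →ₗ[R] N)),
    IsDirectSummand (⨅ i, LinearMap.ker (f i))

/-- `N` is `M`-𝒦-nonsingular. -/
def KNonsingular : Prop :=
  ∀ f : M →ₗ[R] N, EssentialIn (LinearMap.ker f) (⊤ : Submodule R M) → f = 0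

/-- every direct summand of `M` is fully invariant. -/
def WeakDuo : Prop :=
  ∀ K : Submodule R M, IsDirectSummand K → FullyInvariant K

/-- `M` is extending. -/
def Extending : Prop :=
  ∀ L : Submodule R M, ∃ K : Submodule R M, IsDirectSummand K ∧ EssentialIn L K

/-- `M` is lifting. -/
def Lifting : Prop :=
  ∀ L : Submodule R M, ∃ K : Submodule R M, LiesAbove L K

/-- `M` is dual self-CS-Rickart. -/
def DualSelfCSRickart : Prop :=
  ∀ f : M →ₗ[R] M, ∃ K : Submodule R M, LiesAbove (LinearMap.range f) K

/-- `M` is dual self-CS-Baer. -/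
def DualSelfCSBaer : Prop :=
  ∀ (ι : Type*) (f : ι → (M →ₗ[R] M)), ∃ K : Submodule R M,
    LiesAbove (⨆ i, LinearMap.range (f i)) K

/-- `M` is dual strongly self-CS-Baer. -/
def DualStrongSelfCSBaer : Prop :=
  ∀ (ι : Type*) (f : ι → (M →ₗ[R] M)), ∃ K : Submodule R M,
    FullyInvariant K ∧ LiesAbove (⨆ i, LinearMap.range (f i)) K

/-- `M` is SSIP-extending. -/
def SSIPExtending : Prop :=
  ∀ (ι : Type*) (A : ι → Submodule R M),
    (∀ i, ∃ K : Submodule R M, IsDirectSummand K ∧ EssentialIn (A i) K) →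
    ∃ K : Submodule R M, IsDirectSummand K ∧ EssentialIn (⨅ i, A i) K

/-- `M` is ESSIP. -/
def ESSIP : Prop :=
  ∀ (ι : Type*) (A : ι → Submodule R M), (∀ i, IsDirectSummand (A i)) →
    ∃ K : Submodule R M, IsDirectSummand K ∧ EssentialIn (⨅ i, A i) K

/-- The socle of `M`: the sum of all simple (atomic) submodules. -/
def Socle : Submodule R M := sSup {S : Submodule R M | IsAtom S}

/-- `M` is E-M-𝒦-cononsingular. -/
def ECononsingular : Prop :=
  ∀ X Y : Submodule R M, X ≤ Y → lU X = lU Y → EssentialIn X Y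

/-- `M` is E-M-𝒦-nonsingular. -/
def ENonsingular : Prop :=
  ∀ f : M →ₗ[R] M,
    (∃ K : Submodule R M, IsDirectSummand K ∧ EssentialIn (LinearMap.ker f) K) → f = 0

/-- `M` is nonsingular: the singular submodule vanishes. -/
def Nonsingular : Prop :=
  ∀ x : M, EssentialIn (LinearMap.ker (LinearMap.toSpanSingleton R M x))
      (⊤ : Submodule R R) → x = 0

end ModDefs

/-- `R` is semiperfect: `R/J(R)` is semisimple and idempotents lift modulo `J(R)`. -/
def IsSemiperfectRing (R : Type*) [Ring R] : Prop :=
  IsSemisimpleModule R (R ⧸ Ideal.jacobson (⊥ : Ideal R)) ∧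
    ∀ a : R, a * a - a ∈ Ideal.jacobson (⊥ : Ideal R) →
      ∃ e : R, IsIdempotentElem e ∧ e - a ∈ Ideal.jacobson (⊥ : Ideal R)

/-- `R` is semiregular: every principal (one-sided) ideal of `R` lies above a
direct summand of `R` as a module over itself. -/
def IsSemiregularRing (R : Type*) [Ring R] : Prop :=
  ∀ a : R, ∃ K : Submodule R R, LiesAbove (Submodule.span R {a}) K

/-- in a dual strongly self-CS-Baer module every direct summand is
fully invariant; consequently no direct summand is isomorphic to `N ⊕ N` for a
nonzero module `N`. -/
theorem dualStrongSelfCSBaer_weakDuo_no_square_summand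
    {R : Type*} [Ring R] {M : Type*} [AddCommGroup M] [Module R M]
    (h : DualStrongSelfCSBaer R M) :
    WeakDuo R M ∧
      ∀ (N : Type*) [AddCommGroup N] [Module R N], Nontrivial N →
        ∀ K : Submodule R M, IsDirectSummand K → ¬ Nonempty (K ≃ₗ[R] (N × N)) := by
  have weakduo : WeakDuo R M := by
    rintro K ⟨K', hc⟩
    set π : M →ₗ[R] M := K.subtype ∘ₗ K.linearProjOfIsCompl K' hc with hπ
    have hrange : LinearMap.range π = K := by
      apply le_antisymm
      · rintro x ⟨y, rfl⟩
        exact (K.linearProjOfIsCompl K' hc y).2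
      · intro x hx
        exact ⟨x, by simp [hπ, Submodule.linearProjOfIsCompl_apply_left hc ⟨x, hx⟩]; exact congrArg Subtype.val (Submodule.linearProjOfIsCompl_apply_left hc ⟨x, hx⟩)⟩
    obtain ⟨L, hLfi, ⟨_, hLK, hsmall⟩⟩ := h PUnit (fun _ => π)
    rw [iSup_const, hrange] at hLK hsmall
    have hsup : L ⊔ K' = ⊤ := by
      refine hsmall (L ⊔ K') le_sup_left ?_
      rw [← sup_assoc, sup_comm K L, sup_assoc]
      rw [hc.sup_eq_top, sup_top_eq]
    have hKL : K = L := by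
      have : K = (L ⊔ K') ⊓ K := by rw [hsup, top_inf_eq]
      rw [this, sup_inf_assoc_of_le _ hLK, inf_comm, hc.inf_eq_bot, sup_bot_eq]
    rw [hKL]
    exact hLfi
  refine ⟨weakduo, ?_⟩
  rintro N _ _ hN K ⟨K', hc⟩ ⟨e⟩
  set π := K.linearProjOfIsCompl K' hc with hπdef
  -- projection from N × N killing the second coordinate
  set p1 : N × N →ₗ[R] N × N := (LinearMap.fst R N N).prod 0 with hp1
  set q : M →ₗ[R] M :=
    K.subtype ∘ₗ (e.symm : N × N →ₗ[R] K) ∘ₗ p1 ∘ₗ (e : K →ₗ[R] N × N) ∘ₗ π with hq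
  -- the "swap" endomorphism
  set g : M →ₗ[R] M :=
    K.subtype ∘ₗ (e.symm : N × N →ₗ[R] K) ∘ₗ (LinearEquiv.prodComm R N N : N × N →ₗ[R] N × N)
      ∘ₗ (e : K →ₗ[R] N × N) ∘ₗ π with hg
  have hπsub : ∀ z : K, π (z : M) = z := fun z =>
    Submodule.linearProjOfIsCompl_apply_left hc z
  have hqq : ∀ x : M, q (q x) = q x := by
    intro x
    simp [hq, hπsub, hp1, Submodule.coe_subtype]
  -- range q is a direct summand
  have hds : IsDirectSummand (LinearMap.range q) := by
    refine ⟨LinearMap.ker q, ?_, ?_⟩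
    · rw [Submodule.disjoint_def]
      rintro x ⟨y, rfl⟩ hker
      rw [LinearMap.mem_ker] at hker
      rw [← hqq y, hker]
    · rw [codisjoint_iff, eq_top_iff]
      intro x _
      rw [Submodule.mem_sup]
      exact ⟨q x, ⟨x, rfl⟩, x - q x, by simp [hqq x], by abel⟩
  have hfi := weakduo _ hds
  obtain ⟨n, hn⟩ := exists_ne (0 : N)
  set m : M := K.subtype (e.symm (n, 0)) with hm
  have hmmem : m ∈ LinearMap.range q := by
    refine ⟨m, ?_⟩
    simp [hq, hm, hπsub, hp1, Submodule.coe_subtype]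
  have hgm : g m ∈ LinearMap.range q := hfi g ⟨m, hmmem, rfl⟩
  have hgmval : g m = K.subtype (e.symm (0, n)) := by
    simp [hg, hm, hπsub, Submodule.coe_subtype]
  have : q (g m) = g m := by
    obtain ⟨y, hy⟩ := hgm
    rw [← hy, hqq]
  rw [hgmval] at this
  have : (0 : M) = K.subtype (e.symm (0, n)) := by
    rw [← this]
    simp [hq, hπsub, hp1, Submodule.coe_subtype]
    show (0 : M) = ((e.symm 0 : K) : M)
    simp
  have : ((0, n) : N × N) = 0 := by
    have h2 : e.symm (0, n) = 0 := by
      apply Subtype.ext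
      simpa using this.symm
    simpa using congrArg e h2
  exact hn (congrArg Prod.snd this)
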